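/- Let G be a group, H ⊴ G a finite-index normal subgroup generated by X, and Y a finite transversal of H in G containing 1. Assume there is A ≥ 0 such that ℓ_X(y⁻¹ x y) ≤ A for all x ∈ X ∪ X⁻¹ and y ∈ Y. Then there exists C > 0 such that ℓ_X(h) ≤ C·ℓ_{X∪Y}(h) for all h ∈ H. -/

import Mathlib

/-- Word length of `g` with respect to a subset `X` of a group. -/
noncomputable def wordLength {G : Type*} [Group G] (X : Set G) (g : G) : ℕ :=
  sInf {n | ∃ l : List G, l.length = n ∧ (∀ x ∈ l, x ∈ X ∨ x⁻¹ ∈ X) ∧ l.prod = g}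

/-- Reachability by a word of length `n` over `X ∪ X⁻¹`. -/
def WordRel {G : Type*} [Group G] (X : Set G) (g : G) (n : ℕ) : Prop :=
  ∃ l : List G, l.length = n ∧ (∀ x ∈ l, x ∈ X ∨ x⁻¹ ∈ X) ∧ l.prod = g

lemma wordLength_le {G : Type*} [Group G] {X : Set G} {g : G} {n : ℕ}
    (h : WordRel X g n) : wordLength X g ≤ n := Nat.sInf_le h

lemma wordRel_wordLength {G : Type*} [Group G] {X : Set G} {g : G}
    (h : ∃ n, WordRel X g n) : WordRel X g (wordLength X g) :=
  Nat.sInf_mem h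

lemma wordRel_of_mem_closure {G : Type*} [Group G] {X : Set G} {g : G}
    (h : g ∈ Subgroup.closure X) : ∃ n, WordRel X g n := by
  have h' : g ∈ Submonoid.closure (X ∪ X⁻¹) := by
    rw [← Subgroup.closure_toSubmonoid] at *
    exact h
  obtain ⟨l, hl, hp⟩ := Submonoid.exists_list_of_mem_closure h'
  refine ⟨l.length, l, rfl, fun x hx => ?_, hp⟩
  rcases hl x hx with hx' | hx'
  · exact Or.inl hx'
  · exact Or.inr hx'

lemma wordRel_mul {G : Type*} [Group G] {X : Set G} {g g' : G} {m k : ℕ}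
    (h : WordRel X g m) (h' : WordRel X g' k) : WordRel X (g * g') (m + k) := by
  obtain ⟨l, rfl, hl, rfl⟩ := h
  obtain ⟨l', rfl, hl', rfl⟩ := h'
  refine ⟨l ++ l', by simp, fun x hx => ?_, by simp⟩
  rcases List.mem_append.mp hx with h | h
  exacts [hl x h, hl' x h]

/-- If `H ⊴ G` has finite index, `X` generates `H`, `Y` is a finite transversal
containing `1`, and conjugation by elements of `Y` distorts `X`-letters by at most `A`,
then there is `C > 0` with `ℓ_X(h) ≤ C ℓ_{X∪Y}(h)` for all `h ∈ H`. -/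
theorem undistorted_of_bounded_conjugates {G : Type*} [Group G] (H : Subgroup G)
    [H.Normal] (hfin : H.FiniteIndex)
    (X Y : Set G) (hXH : X ⊆ (H : Set G)) (hXgen : Subgroup.closure X = H)
    (hYfin : Y.Finite) (hYtrans : ∀ g : G, ∃! y, y ∈ Y ∧ g * y ∈ H) (h1Y : (1 : G) ∈ Y)
    (A : ℕ) (hA : ∀ x ∈ X ∪ X⁻¹, ∀ y ∈ Y, wordLength X (y⁻¹ * x * y) ≤ A) :
    ∃ C : ℕ, 0 < C ∧ ∀ h ∈ H, wordLength X h ≤ C * wordLength (X ∪ Y) h := by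
  classical
  have hnorm : H.Normal := inferInstance
  -- every element of H is reachable over X
  have hmemrel : ∀ g ∈ H, ∃ n, WordRel X g n := by
    intro g hg
    exact wordRel_of_mem_closure (by rw [hXgen]; exact hg)
  -- the finite set of "transition" elements coming from Y-letters
  set T : Set G := (fun p : G × G × G => p.1⁻¹ * p.2.1 * p.2.2) ''
      (Y ×ˢ ((Y ∪ Y⁻¹) ×ˢ Y)) with hT
  have hTfin : T.Finite :=
    (hYfin.prod ((hYfin.union hYfin.inv).prod hYfin)).image _
  obtain ⟨B, hB⟩ := (hTfin.image (wordLength X)).bddAbove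
  have hBle : ∀ t ∈ T, wordLength X t ≤ B := fun t ht =>
    hB (Set.mem_image_of_mem _ ht)
  set C : ℕ := max A B + 1 with hC
  refine ⟨C, Nat.succ_pos _, ?_⟩
  -- key induction
  have key : ∀ l : List G, (∀ x ∈ l, x ∈ X ∪ Y ∨ x⁻¹ ∈ X ∪ Y) →
      ∀ y ∈ Y, y⁻¹ * l.prod ∈ H → wordLength X (y⁻¹ * l.prod) ≤ C * l.length := by
    intro l
    induction l with
    | nil =>
      intro _ y hy hmem
      simp only [List.prod_nil, mul_one] at hmem ⊢
      have hle : wordLength X (y⁻¹) ≤ 0 := wordLength_le ⟨[], rfl, by simp, by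
        have hyH : (1 : G) * y ∈ H := by
          simpa using H.inv_mem hmem
        have := (hYtrans 1).unique ⟨hy, hyH⟩ ⟨h1Y, by simpa using H.one_mem⟩
        simp [this]⟩
      simpa using hle
    | cons a l' ih =>
      intro hmem y hy hH
      obtain ⟨z, ⟨hz, hzH⟩, -⟩ := hYtrans (y⁻¹ * a)
      have hf : y⁻¹ * a * z ∈ H := hzH
      have hrest : z⁻¹ * l'.prod ∈ H := by
        have heq : (y⁻¹ * a * z)⁻¹ * (y⁻¹ * (a :: l').prod) = z⁻¹ * l'.prod := by
          simp only [List.prod_cons]; group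
        rw [← heq]
        exact H.mul_mem (H.inv_mem hf) hH
      -- the first factor is short
      have hfshort : wordLength X (y⁻¹ * a * z) ≤ max A B := by
        rcases hmem a List.mem_cons_self with (hx | hx) | (hx | hx)
        · -- a ∈ X
          have hconj : (y⁻¹ * a) * y ∈ H := by
            have := hnorm.conj_mem a (hXH hx) y⁻¹
            simpa [mul_assoc] using this
          have hyz : y = z := (hYtrans (y⁻¹ * a)).unique ⟨hy, hconj⟩ ⟨hz, hzH⟩
          subst hyz
          exact le_trans (hA a (Or.inl hx) y hy) (le_max_left A B)
        · -- a ∈ Y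
          refine le_trans (hBle _ ⟨(y, a, z), ⟨hy, Or.inl hx, hz⟩, rfl⟩) (le_max_right A B)
        · -- a⁻¹ ∈ X
          have haH : a ∈ H := by
            have := H.inv_mem (hXH hx)
            simpa using this
          have hconj : (y⁻¹ * a) * y ∈ H := by
            have := hnorm.conj_mem a haH y⁻¹
            simpa [mul_assoc] using this
          have hyz : y = z := (hYtrans (y⁻¹ * a)).unique ⟨hy, hconj⟩ ⟨hz, hzH⟩
          subst hyz
          exact le_trans (hA a (Or.inr (by simpa using hx)) y hy) (le_max_left A B)
        · -- a⁻¹ ∈ Y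
          refine le_trans (hBle _ ⟨(y, a, z), ⟨hy, Or.inr (by simpa using hx), hz⟩, rfl⟩)
            (le_max_right A B)
      -- combine
      have hrel1 : WordRel X (y⁻¹ * a * z) (wordLength X (y⁻¹ * a * z)) :=
        wordRel_wordLength (hmemrel _ hf)
      have hrel2 : WordRel X (z⁻¹ * l'.prod) (wordLength X (z⁻¹ * l'.prod)) :=
        wordRel_wordLength (hmemrel _ hrest)
      have hprod : (y⁻¹ * a * z) * (z⁻¹ * l'.prod) = y⁻¹ * (a :: l').prod := by
        simp only [List.prod_cons]; group
      have hcomb : wordLength X (y⁻¹ * (a :: l').prod) ≤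
          wordLength X (y⁻¹ * a * z) + wordLength X (z⁻¹ * l'.prod) := by
        rw [← hprod]
        exact wordLength_le (wordRel_mul hrel1 hrel2)
      have hih : wordLength X (z⁻¹ * l'.prod) ≤ C * l'.length :=
        ih (fun x hx => hmem x (List.mem_cons_of_mem a hx)) z hz hrest
      calc wordLength X (y⁻¹ * (a :: l').prod)
          ≤ wordLength X (y⁻¹ * a * z) + wordLength X (z⁻¹ * l'.prod) := hcomb
        _ ≤ max A B + C * l'.length := Nat.add_le_add hfshort hih
        _ ≤ C * (a :: l').length := by
            simp only [List.length_cons, Nat.mul_succ]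
            omega
  -- conclude
  intro h hh
  have hmem' : h ∈ Subgroup.closure (X ∪ Y) := by
    have : h ∈ Subgroup.closure X := by rw [hXgen]; exact hh
    exact Subgroup.closure_mono Set.subset_union_left this
  obtain ⟨l, hlen, hl, hprod⟩ := wordRel_wordLength (wordRel_of_mem_closure hmem')
  have := key l hl 1 h1Y (by simpa [hprod] using hh)
  simpa [hprod, hlen] using this
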